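/- Fix h ∈ ℂ and r ∈ ℂ with r ≠ 0. On A = ℂ[x⁰,x¹,x²,x³] set p_μ := −i∂_μ, and let T_r := (1 − rh·p₀)^{−1/r} be the operator defined by the generalized binomial series Σ_{n≥0} binom(−1/r, n)(−rh)ⁿ p₀ⁿ, where binom(α,n) := α(α−1)⋯(α−n+1)/n! (a well-defined operator since ∂₀ is locally nilpotent on polynomials). Define x̂⁰_r := x⁰∘(1 − rh·p₀) and x̂^j_r := x^j∘T_r for j = 1,2,3. Then: (a) [x̂⁰_r, x̂^j_r] = ih·x̂^j_r and [x̂^j_r, x̂^k_r] = 0 (the κ-Minkowski relations); (b) the r-deformed phase-space relations hold: [x̂⁰_r, p₀] = i(1 − rh·p₀), [x̂^j_r, p_k] = i δ^j_k T_r, [x̂⁰_r, p_k] = 0, and [x̂^j_r, p₀] = 0. -/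

import Mathlib

open MvPolynomial

noncomputable section

/-- The multiplication-by-`x^μ` operator on `ℂ[x⁰,x¹,x²,x³]`. -/
def Xop (μ : Fin 4) : Module.End ℂ (MvPolynomial (Fin 4) ℂ) :=
  LinearMap.mulLeft ℂ (X μ)

/-- The partial-derivative operator `∂_μ` on `ℂ[x⁰,x¹,x²,x³]`. -/
def Dop (μ : Fin 4) : Module.End ℂ (MvPolynomial (Fin 4) ℂ) :=
  (pderiv μ).toLinearMap

/-- The momentum operator `p_μ := −i∂_μ`. -/
def Pop (μ : Fin 4) : Module.End ℂ (MvPolynomial (Fin 4) ℂ) :=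
  (-Complex.I) • Dop μ

/-- The operator `Σ_{n≥0} g n • ∂₀ⁿ` on `ℂ[x⁰,x¹,x²,x³]`; it is well defined since `∂₀` is
locally nilpotent on polynomials (on the monomial `x^m` only the terms with `n ≤ m 0` are
nonzero, so the series reduces to the indicated finite sum on each basis monomial). -/
def seriesOp (g : ℕ → ℂ) : Module.End ℂ (MvPolynomial (Fin 4) ℂ) :=
  (basisMonomials (Fin 4) ℂ).constr ℂ fun m : Fin 4 →₀ ℕ =>
    ∑ n ∈ Finset.range (m 0 + 1), g n • (Dop 0 ^ n) (monomial m 1)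

/-- The generalized binomial coefficient `binom(α, n) = α(α−1)⋯(α−n+1)/n!`. -/
def binomC (α : ℂ) (n : ℕ) : ℂ :=
  (∏ k ∈ Finset.range n, (α - k)) / (n.factorial : ℂ)

/-- `T_r := (1 − rh·p₀)^{−1/r} = Σ_{n≥0} binom(−1/r, n)·(−rh)ⁿ·p₀ⁿ`, with `p₀ⁿ = (−i)ⁿ∂₀ⁿ`. -/
def Trop (r h : ℂ) : Module.End ℂ (MvPolynomial (Fin 4) ℂ) :=
  seriesOp fun n => binomC (-1 / r) n * (-(r * h)) ^ n * (-Complex.I) ^ n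

/-- `x̂⁰_r := x⁰ ∘ (1 − rh·p₀)`. -/
def xhat0J (r h : ℂ) : Module.End ℂ (MvPolynomial (Fin 4) ℂ) :=
  Xop 0 * (1 - (r * h) • Pop 0)

/-- `x̂^j_r := x^j ∘ T_r`. -/
def xhatJ (r h : ℂ) (j : Fin 4) : Module.End ℂ (MvPolynomial (Fin 4) ℂ) :=
  Xop j * Trop r h

lemma Dop_apply (μ : Fin 4) (p : MvPolynomial (Fin 4) ℂ) : Dop μ p = pderiv μ p := rfl
lemma Xop_apply (μ : Fin 4) (p : MvPolynomial (Fin 4) ℂ) : Xop μ p = X μ * p := rfl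

lemma Dop_mul_Xop (μ ν : Fin 4) :
    Dop μ * Xop ν = Xop ν * Dop μ + (if μ = ν then 1 else 0) := by
  apply LinearMap.ext; intro p
  by_cases hμν : μ = ν
  · simp [Dop_apply, Xop_apply, Module.End.mul_apply, pderiv_mul, hμν, add_comm]
  · simp [Dop_apply, Xop_apply, Module.End.mul_apply, pderiv_mul, hμν,
      pderiv_X_of_ne (Ne.symm hμν)]

lemma Dop_mul_Dop (μ ν : Fin 4) : Dop μ * Dop ν = Dop ν * Dop μ := by
  refine Module.Basis.ext (basisMonomials (Fin 4) ℂ) fun m => ?_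
  simp only [coe_basisMonomials, Module.End.mul_apply, Dop_apply, pderiv_monomial, one_mul]
  by_cases hμν : μ = ν
  · subst hμν; rfl
  · rw [tsub_tsub, tsub_tsub, add_comm]
    congr 1
    rw [Finsupp.tsub_apply, Finsupp.tsub_apply, Finsupp.single_apply, Finsupp.single_apply,
      if_neg hμν, if_neg (Ne.symm hμν)]
    simp [mul_comm]

lemma Xop_mul_Xop (μ ν : Fin 4) : Xop μ * Xop ν = Xop ν * Xop μ := by
  apply LinearMap.ext; intro p
  simp [Xop_apply, Module.End.mul_apply, mul_left_comm]

lemma seriesOp_monomial (g : ℕ → ℂ) (m : Fin 4 →₀ ℕ) :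
    seriesOp g (monomial m 1) =
      ∑ n ∈ Finset.range (m 0 + 1), g n • (Dop 0 ^ n) (monomial m 1) := by
  have h := Module.Basis.constr_basis (basisMonomials (Fin 4) ℂ) ℂ
    (fun m : Fin 4 →₀ ℕ => ∑ n ∈ Finset.range (m 0 + 1), g n • (Dop 0 ^ n) (monomial m 1)) m
  rw [coe_basisMonomials] at h
  exact h

lemma Dpow_monomial (n : ℕ) (m : Fin 4 →₀ ℕ) :
    (Dop 0 ^ n) (monomial m 1) =
      monomial (m - Finsupp.single 0 n) (∏ k ∈ Finset.range n, ((m 0 : ℂ) - k)) := by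
  induction n with
  | zero => simp
  | succ n ih =>
    rw [pow_succ', Module.End.mul_apply, ih, Dop_apply, pderiv_monomial,
      Finset.prod_range_succ, tsub_tsub, ← Finsupp.single_add]
    congr 1
    rw [Finsupp.tsub_apply, Finsupp.single_apply, if_pos rfl]
    by_cases hmn : n ≤ m 0
    · rw [Nat.cast_sub hmn]
    · rw [Finset.prod_eq_zero (Finset.mem_range.2 (by omega : m 0 < n)) (by simp)]
      simp

lemma Dpow_monomial_eq_zero {n : ℕ} {m : Fin 4 →₀ ℕ} (h : m 0 < n) :
    (Dop 0 ^ n) (monomial m 1) = 0 := by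
  rw [Dpow_monomial, Finset.prod_eq_zero (Finset.mem_range.2 h) (by simp), monomial_zero]

lemma seriesOp_monomial' (g : ℕ → ℂ) (m : Fin 4 →₀ ℕ) {N : ℕ} (hN : m 0 < N) :
    seriesOp g (monomial m 1) = ∑ n ∈ Finset.range N, g n • (Dop 0 ^ n) (monomial m 1) := by
  rw [seriesOp_monomial]
  refine Finset.sum_subset (Finset.range_subset_range.2 hN) fun n _ hn => ?_
  rw [Dpow_monomial_eq_zero (by simp at hn; omega), smul_zero]

lemma seriesOp_add (g₁ g₂ : ℕ → ℂ) :
    seriesOp (fun n => g₁ n + g₂ n) = seriesOp g₁ + seriesOp g₂ := by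
  refine Module.Basis.ext (basisMonomials (Fin 4) ℂ) fun m => ?_
  simp only [coe_basisMonomials, LinearMap.add_apply, seriesOp_monomial, add_smul,
    Finset.sum_add_distrib]

lemma seriesOp_smul (a : ℂ) (g : ℕ → ℂ) :
    seriesOp (fun n => a * g n) = a • seriesOp g := by
  refine Module.Basis.ext (basisMonomials (Fin 4) ℂ) fun m => ?_
  simp only [coe_basisMonomials, LinearMap.smul_apply, seriesOp_monomial, mul_smul,
    Finset.smul_sum]

lemma Dop_comm_seriesOp (μ : Fin 4) (g : ℕ → ℂ) :
    Dop μ * seriesOp g = seriesOp g * Dop μ := by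
  refine Module.Basis.ext (basisMonomials (Fin 4) ℂ) fun m => ?_
  rw [coe_basisMonomials]
  have h1 : Dop μ (monomial m 1) = (m μ : ℂ) • monomial (m - Finsupp.single μ 1) 1 := by
    rw [Dop_apply, pderiv_monomial, one_mul, smul_monomial, smul_eq_mul, mul_one]
  have hle : (m - Finsupp.single μ 1 : Fin 4 →₀ ℕ) 0 < m 0 + 1 := by
    rw [Finsupp.tsub_apply]; omega
  rw [Module.End.mul_apply, Module.End.mul_apply, seriesOp_monomial, h1, map_smul,
    seriesOp_monomial' g _ hle, map_sum]
  rw [Finset.smul_sum]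
  refine Finset.sum_congr rfl fun n _ => ?_
  have hc : Dop μ * Dop 0 ^ n = Dop 0 ^ n * Dop μ :=
    Commute.pow_right (Dop_mul_Dop μ 0) n
  calc Dop μ (g n • (Dop 0 ^ n) (monomial m 1))
      = g n • (Dop 0 ^ n) (Dop μ (monomial m 1)) := by
        rw [map_smul]
        rw [← Module.End.mul_apply, hc, Module.End.mul_apply]
    _ = (m μ : ℂ) • g n • (Dop 0 ^ n) (monomial (m - Finsupp.single μ 1) 1) := by
        rw [h1, map_smul, smul_comm]

lemma Xop_monomial (ν : Fin 4) (m : Fin 4 →₀ ℕ) :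
    Xop ν (monomial m 1) = monomial (m + Finsupp.single ν 1) 1 := by
  rw [Xop_apply, X, monomial_mul, one_mul, add_comm]

lemma seriesOp_mul_Xop {ν : Fin 4} (hν : ν ≠ 0) (g : ℕ → ℂ) :
    seriesOp g * Xop ν = Xop ν * seriesOp g := by
  refine Module.Basis.ext (basisMonomials (Fin 4) ℂ) fun m => ?_
  rw [coe_basisMonomials]
  have hm : (m + Finsupp.single ν 1 : Fin 4 →₀ ℕ) 0 < m 0 + 1 := by
    rw [Finsupp.add_apply, Finsupp.single_apply, if_neg hν]; omega
  rw [Module.End.mul_apply, Module.End.mul_apply, Xop_monomial,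
    seriesOp_monomial' g _ hm, seriesOp_monomial, map_sum]
  refine Finset.sum_congr rfl fun n _ => ?_
  have hc : Dop 0 ^ n * Xop ν = Xop ν * Dop 0 ^ n := by
    have h := Dop_mul_Xop 0 ν
    rw [if_neg (Ne.symm hν), add_zero] at h
    exact (Commute.pow_left h n)
  rw [map_smul, ← Xop_monomial, ← Module.End.mul_apply, hc, Module.End.mul_apply]

lemma Dpow_mul_Xop0 (n : ℕ) :
    Dop 0 ^ (n + 1) * Xop 0 = Xop 0 * Dop 0 ^ (n + 1) + ((n : ℂ) + 1) • Dop 0 ^ n := by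
  induction n with
  | zero =>
    have h := Dop_mul_Xop 0 0
    rw [if_pos rfl] at h
    simpa using h
  | succ n ih =>
    have h := Dop_mul_Xop 0 0
    rw [if_pos rfl] at h
    calc Dop 0 ^ (n + 2) * Xop 0 = Dop 0 * (Dop 0 ^ (n + 1) * Xop 0) := by
          rw [← mul_assoc, ← pow_succ']
      _ = Dop 0 * (Xop 0 * Dop 0 ^ (n + 1)) + ((n : ℂ) + 1) • (Dop 0 * Dop 0 ^ n) := by
          rw [ih, mul_add, mul_smul_comm]
      _ = (Xop 0 * Dop 0 + 1) * Dop 0 ^ (n + 1) + ((n : ℂ) + 1) • Dop 0 ^ (n + 1) := by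
          rw [← mul_assoc, h, ← pow_succ']
      _ = Xop 0 * Dop 0 ^ (n + 1 + 1) + ((((n : ℕ) + 1 : ℕ) : ℂ) + 1) • Dop 0 ^ (n + 1) := by
          rw [add_mul, one_mul, mul_assoc, ← pow_succ']
          push_cast
          module

lemma seriesOp_mul_Xop0 (g : ℕ → ℂ) :
    seriesOp g * Xop 0 = Xop 0 * seriesOp g + seriesOp (fun n => ((n : ℂ) + 1) * g (n + 1)) := by
  refine Module.Basis.ext (basisMonomials (Fin 4) ℂ) fun m => ?_
  rw [coe_basisMonomials]
  rw [Module.End.mul_apply, LinearMap.add_apply, Module.End.mul_apply, Xop_monomial]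
  have hm0 : (m + Finsupp.single 0 1 : Fin 4 →₀ ℕ) 0 + 1 = m 0 + 2 := by
    rw [Finsupp.add_apply, Finsupp.single_apply, if_pos rfl]
  rw [seriesOp_monomial, hm0,
    seriesOp_monomial' g m (Nat.lt_succ_of_lt (Nat.lt_succ_self _)), seriesOp_monomial, map_sum]
  rw [Finset.sum_range_succ'
      (fun n => g n • (Dop 0 ^ n) (monomial (m + Finsupp.single 0 1) 1)) (m 0 + 1),
    Finset.sum_range_succ'
      (fun n => Xop 0 (g n • (Dop 0 ^ n) (monomial m 1))) (m 0 + 1)]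
  have hterm : ∀ k : ℕ, (Dop 0 ^ (k + 1)) (monomial (m + Finsupp.single 0 1) 1)
      = Xop 0 ((Dop 0 ^ (k + 1)) (monomial m 1)) + ((k : ℂ) + 1) • (Dop 0 ^ k) (monomial m 1) := by
    intro k
    have h := LinearMap.congr_fun (Dpow_mul_Xop0 k) (monomial m 1)
    simp only [Module.End.mul_apply, LinearMap.add_apply, LinearMap.smul_apply,
      Xop_monomial] at h
    exact h
  simp only [hterm, smul_add, smul_smul, pow_zero, Module.End.one_apply, map_smul, Xop_monomial]
  rw [Finset.sum_add_distrib]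
  have hc : ∀ n ∈ Finset.range (m 0 + 1),
      (((n : ℂ) + 1) * g (n + 1)) • (Dop 0 ^ n) (monomial m 1)
      = (g (n + 1) * ((n : ℂ) + 1)) • (Dop 0 ^ n) (monomial m 1) := by
    intro n _
    rw [mul_comm]
  rw [Finset.sum_congr rfl hc]
  abel

lemma Dop0_mul_seriesOp (g : ℕ → ℂ) :
    Dop 0 * seriesOp g = seriesOp (fun n => if n = 0 then 0 else g (n - 1)) := by
  refine Module.Basis.ext (basisMonomials (Fin 4) ℂ) fun m => ?_
  rw [coe_basisMonomials, Module.End.mul_apply, seriesOp_monomial, seriesOp_monomial, map_sum]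
  rw [Finset.sum_range_succ (fun n => Dop 0 (g n • (Dop 0 ^ n) (monomial m 1))) (m 0),
    Finset.sum_range_succ'
      (fun n => (if n = 0 then (0 : ℂ) else g (n - 1)) • (Dop 0 ^ n) (monomial m 1)) (m 0)]
  have hterm : ∀ k : ℕ, Dop 0 (g k • (Dop 0 ^ k) (monomial m 1))
      = g k • (Dop 0 ^ (k + 1)) (monomial m 1) := by
    intro k
    rw [map_smul, pow_succ', Module.End.mul_apply]
  simp only [hterm]
  rw [Dpow_monomial_eq_zero (Nat.lt_succ_self _), smul_zero, add_zero]
  simp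


lemma binomC_succ (α : ℂ) (n : ℕ) :
    ((n : ℂ) + 1) * binomC α (n + 1) = (α - n) * binomC α n := by
  unfold binomC
  have h1 : ((n.factorial : ℂ)) ≠ 0 := Nat.cast_ne_zero.2 (Nat.factorial_ne_zero n)
  have h2 : (((n + 1).factorial : ℂ)) ≠ 0 := Nat.cast_ne_zero.2 (Nat.factorial_ne_zero _)
  have h3 : ((n : ℂ) + 1) ≠ 0 := Nat.cast_add_one_ne_zero n
  rw [Finset.prod_range_succ, Nat.factorial_succ]
  field_simp
  push_cast
  ring

lemma coeff_identity (r h : ℂ) (hr : r ≠ 0) (n : ℕ) :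
    ((n : ℂ) + 1) * (binomC (-1 / r) (n + 1) * (-(r * h)) ^ (n + 1) * (-Complex.I) ^ (n + 1))
      + (Complex.I * r * h) *
        ((n : ℂ) * (binomC (-1 / r) n * (-(r * h)) ^ n * (-Complex.I) ^ n))
    = (-(Complex.I * h)) * (binomC (-1 / r) n * (-(r * h)) ^ n * (-Complex.I) ^ n) := by
  have h1 := binomC_succ (-1 / r) n
  have hβ : (-1 / r) * r = -1 := by field_simp
  rw [pow_succ, pow_succ]
  linear_combination ((-(r * h)) ^ n * (-Complex.I) ^ n * r * h * Complex.I) * h1 +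
    (binomC (-1 / r) n * (-(r * h)) ^ n * (-Complex.I) ^ n * Complex.I * h) * hβ


abbrev EndA := Module.End ℂ (MvPolynomial (Fin 4) ℂ)

lemma helper_a (x0 xj t a t' : EndA) (w : ℂ)
    (f1 : a * xj = xj * a) (f2 : t * x0 = x0 * t + t') (f3 : a * t = t * a)
    (f4 : t' * a = (-w) • t) (f5 : x0 * xj = xj * x0) :
    x0 * a * (xj * t) - xj * t * (x0 * a) = w • (xj * t) := by
  have e1 : x0 * a * (xj * t) = xj * (x0 * (t * a)) := by
    rw [mul_assoc, ← mul_assoc a, f1, mul_assoc, f3, ← mul_assoc, ← mul_assoc, f5,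
      mul_assoc, mul_assoc]
  have e2 : xj * t * (x0 * a) = xj * (x0 * (t * a)) + xj * ((-w) • t) := by
    rw [← f4, mul_assoc, ← mul_assoc t, f2, add_mul, mul_add, ← mul_assoc, ← mul_assoc,
      mul_assoc (xj * x0) t a, mul_assoc xj x0 (t * a)]
  rw [e1, e2, mul_smul_comm]
  module

lemma helper_b1 (x0 a p : EndA) (w : ℂ)
    (f1 : a * p = p * a) (f2 : p * x0 = x0 * p + (-w) • 1) :
    x0 * a * p - p * (x0 * a) = w • a := by
  have e1 : x0 * a * p = x0 * p * a := by
    rw [mul_assoc, f1, mul_assoc]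
  have e2 : p * (x0 * a) = x0 * p * a + (-w) • a := by
    rw [← mul_assoc, f2, add_mul, smul_mul_assoc, one_mul]
  rw [e1, e2]
  module

lemma helper_b2 (xj t d e : EndA) (w : ℂ)
    (f1 : t * d = d * t) (f2 : d * xj = xj * d + e) :
    xj * t * ((-Complex.I) • d) - ((-Complex.I) • d) * (xj * t)
      = Complex.I • (e * t) := by
  have e1 : xj * t * ((-Complex.I) • d) = (-Complex.I) • (xj * d * t) := by
    rw [mul_smul_comm, mul_assoc, f1, ← mul_assoc]
  have e2 : ((-Complex.I) • d) * (xj * t)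
      = (-Complex.I) • (xj * d * t) + (-Complex.I) • (e * t) := by
    rw [smul_mul_assoc, ← mul_assoc, f2, add_mul, smul_add]
  rw [e1, e2]
  module

/-- The Jordanian-twist family of Heisenberg realizations of κ-Minkowski spacetime together
with the r-deformed phase-space (deformed Weyl algebra) relations. -/
theorem jordanian_realization_kappa_minkowski (r h : ℂ) (hr : r ≠ 0) :
    -- (a) κ-Minkowski relations
    (∀ j ∈ ({1, 2, 3} : Finset (Fin 4)),
      xhat0J r h * xhatJ r h j - xhatJ r h j * xhat0J r h
        = (Complex.I * h) • xhatJ r h j) ∧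
    (∀ j ∈ ({1, 2, 3} : Finset (Fin 4)), ∀ k ∈ ({1, 2, 3} : Finset (Fin 4)),
      xhatJ r h j * xhatJ r h k - xhatJ r h k * xhatJ r h j = 0) ∧
    -- (b) r-deformed phase-space relations
    (xhat0J r h * Pop 0 - Pop 0 * xhat0J r h
        = Complex.I • (1 - (r * h) • Pop 0)) ∧
    (∀ j ∈ ({1, 2, 3} : Finset (Fin 4)), ∀ k ∈ ({1, 2, 3} : Finset (Fin 4)),
      xhatJ r h j * Pop k - Pop k * xhatJ r h j
        = if j = k then Complex.I • Trop r h else 0) ∧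
    (∀ k ∈ ({1, 2, 3} : Finset (Fin 4)),
      xhat0J r h * Pop k - Pop k * xhat0J r h = 0) ∧
    (∀ j ∈ ({1, 2, 3} : Finset (Fin 4)),
      xhatJ r h j * Pop 0 - Pop 0 * xhatJ r h j = 0) := by
  have hmem : ∀ j : Fin 4, j ∈ ({1, 2, 3} : Finset (Fin 4)) → j ≠ 0 := by decide
  set c : ℂ := Complex.I * r * h with hc
  set gT : ℕ → ℂ := fun n => binomC (-1 / r) n * (-(r * h)) ^ n * (-Complex.I) ^ n with hgT
  set gT' : ℕ → ℂ := fun n => ((n : ℂ) + 1) * gT (n + 1) with hgT'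
  have hTrop : Trop r h = seriesOp gT := rfl
  -- A₀ = 1 + c • D₀
  have hA0 : (1 : EndA) - (r * h) • Pop 0 = 1 + c • Dop 0 := by
    rw [Pop, hc]
    match_scalars <;> ring
  -- basic commutators
  have hDX0 : Dop 0 * Xop 0 = Xop 0 * Dop 0 + 1 := by
    have h := Dop_mul_Xop 0 0; rwa [if_pos rfl] at h
  have hDXne : ∀ μ ν : Fin 4, μ ≠ ν → Dop μ * Xop ν = Xop ν * Dop μ := by
    intro μ ν hμν
    have h := Dop_mul_Xop μ ν; rwa [if_neg hμν, add_zero] at h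
  have hAT : (1 + c • Dop 0) * seriesOp gT = seriesOp gT * (1 + c • Dop 0) := by
    rw [add_mul, mul_add, one_mul, mul_one, smul_mul_assoc, mul_smul_comm,
      Dop_comm_seriesOp 0 gT]
  have hAX : ∀ j : Fin 4, j ≠ 0 → (1 + c • Dop 0) * Xop j = Xop j * (1 + c • Dop 0) := by
    intro j hj
    rw [add_mul, mul_add, one_mul, mul_one, smul_mul_assoc, mul_smul_comm, hDXne 0 j (Ne.symm hj)]
  have hTX0 : seriesOp gT * Xop 0 = Xop 0 * seriesOp gT + seriesOp gT' :=
    seriesOp_mul_Xop0 gT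
  -- T' * A = -(I h) • T
  have hT'A : seriesOp gT' * (1 + c • Dop 0) = (-(Complex.I * h)) • seriesOp gT := by
    rw [mul_add, mul_one, mul_smul_comm, ← Dop_comm_seriesOp 0 gT', Dop0_mul_seriesOp gT',
      ← seriesOp_smul c, ← seriesOp_add, ← seriesOp_smul (-(Complex.I * h))]
    congr 1
    funext n
    cases n with
    | zero =>
      have hid := coeff_identity r h hr 0
      simp only [Nat.cast_zero, zero_add, zero_mul, mul_zero, add_zero] at hid ⊢
      simpa [hgT', hgT, hc] using hid
    | succ k =>
      have hid := coeff_identity r h hr (k + 1)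
      simp only [hgT', hgT, hc, Nat.add_eq_zero, Nat.succ_ne_zero, false_and, if_false,
        Nat.add_sub_cancel]
      push_cast at hid ⊢
      linear_combination hid
  refine ⟨?_, ?_, ?_, ?_, ?_, ?_⟩
  · -- (a1)
    intro j hj
    have hj0 := hmem j hj
    rw [xhat0J, xhatJ, hA0, hTrop]
    exact helper_a (Xop 0) (Xop j) (seriesOp gT) (1 + c • Dop 0) (seriesOp gT')
      (Complex.I * h) (hAX j hj0) hTX0 hAT hT'A (Xop_mul_Xop 0 j)
  · -- (a2)
    intro j hj k hk
    have hj0 := hmem j hj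
    have hk0 := hmem k hk
    rw [sub_eq_zero, xhatJ, xhatJ, hTrop]
    have h1 : Commute (Xop j * seriesOp gT) (Xop k) :=
      Commute.mul_left (Xop_mul_Xop j k) (seriesOp_mul_Xop hk0 gT)
    have h2 : Commute (Xop j * seriesOp gT) (seriesOp gT) :=
      Commute.mul_left ((seriesOp_mul_Xop hj0 gT).symm) rfl
    exact (h1.mul_right h2).eq
  · -- (b1)
    rw [xhat0J, hA0]
    refine helper_b1 (Xop 0) (1 + c • Dop 0) (Pop 0) Complex.I ?_ ?_
    · rw [Pop, mul_smul_comm, smul_mul_assoc, add_mul, mul_add, one_mul, mul_one,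
        smul_mul_assoc, mul_smul_comm]
    · rw [Pop, smul_mul_assoc, hDX0, smul_add, mul_smul_comm]
  · -- (b2)
    intro j hj k hk
    have hj0 := hmem j hj
    rw [xhatJ, hTrop, Pop]
    have hcomm : seriesOp gT * Dop k = Dop k * seriesOp gT := (Dop_comm_seriesOp k gT).symm
    have hf2 : Dop k * Xop j = Xop j * Dop k + (if k = j then 1 else 0) := Dop_mul_Xop k j
    have := helper_b2 (Xop j) (seriesOp gT) (Dop k) (if k = j then 1 else 0) Complex.I
      hcomm hf2
    rw [this]
    by_cases hjk : j = k
    · rw [if_pos hjk, if_pos hjk.symm, one_mul]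
    · rw [if_neg hjk, if_neg (fun e => hjk e.symm), zero_mul, smul_zero]
  · -- (b4)
    intro k hk
    have hk0 := hmem k hk
    rw [sub_eq_zero, xhat0J, hA0, Pop]
    have h1 : Commute (Xop 0 * (1 + c • Dop 0)) (Dop k) := by
      refine Commute.mul_left ?_ ?_
      · exact (hDXne k 0 hk0).symm
      · refine Commute.add_left (Commute.one_left _) ?_
        exact Commute.smul_left (Dop_mul_Dop 0 k) c
    exact (h1.smul_right (-Complex.I)).eq
  · -- (b5)
    intro j hj
    have hj0 := hmem j hj
    rw [sub_eq_zero, xhatJ, hTrop, Pop]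
    have h1 : Commute (Xop j * seriesOp gT) (Dop 0) := by
      refine Commute.mul_left ?_ ?_
      · exact (hDXne 0 j (Ne.symm hj0)).symm
      · exact (Dop_comm_seriesOp 0 gT).symm
    exact (h1.smul_right (-Complex.I)).eq

end
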